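/- In any execution of the Eneström–Phragmén procedure, if w_*[s] > q for every step s = 0,…,n−1, then after the n-th allocation the total remaining vote weight satisfies v[n] = Σ_k v_k[n] = q, and w_i[n] = Σ_{k : i∈A_k} v_k[n] ≤ q for every candidate i. Consequently there always exists some s ≤ n with w_*[s] ≤ q (where w_*[n] denotes max_{i∈I[n]} w_i[n]), i.e., p := min{s : w_*[s] ≤ q} satisfies p ≤ n. -/
import Mathlib


/-!
The Eneström–Phragmén procedure.

We fix a number of seats `n ≥ 1`, a finite set `ι` of candidates with capacities
`m i ∈ ℕ∞`, a finite set `κ` of vote types, and for each vote type a positive weight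
`v k` and a nonempty approval set `A k`.  The total vote is `V = ∑ k, v k` and the
(Droop) quota is `q = V / (n + 1)`.  An execution of the procedure is recorded by the
vote weights `vk s k` at each step `s`, the seat counts `seats s i`, and the candidate
`winner s` receiving seat `s + 1` (for `s < n`), subject to the rules of the procedure.
-/

namespace EP

/-- The data of an Eneström–Phragmén election. -/
structure Input (ι κ : Type*) [Fintype ι] [DecidableEq ι] [Fintype κ] : Type _ where
  /-- number of seats -/
  n : ℕ
  hn : 1 ≤ n
  /-- capacities of the candidates -/
  m : ι → ℕ∞
  /-- weights of the vote types -/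
  v : κ → ℝ
  hv : ∀ k, 0 < v k
  /-- approval sets of the vote types -/
  A : κ → Finset ι
  hA : ∀ k, (A k).Nonempty

namespace Input

variable {ι κ : Type*} [Fintype ι] [DecidableEq ι] [Fintype κ] (P : Input ι κ)

/-- Total number of votes. -/
noncomputable def V : ℝ := ∑ k, P.v k

/-- The Droop quota `q = v / (n + 1)`. -/
noncomputable def q : ℝ := P.V / (P.n + 1)

/-- Support of candidate `i` given current vote weights `u`:
`w_i = ∑_{k : i ∈ A_k} u_k`. -/
noncomputable def supp (u : κ → ℝ) (i : ι) : ℝ :=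
  ∑ k ∈ Finset.univ.filter (fun k => i ∈ P.A k), u k

/-- Standing assumption: at least `n` candidates have positive initial support. -/
def enough : Prop := P.n ≤ {i : ι | 0 < P.supp P.v i}.ncard

end Input

/-- An execution of the Eneström–Phragmén procedure: at each step `s < n`,
seat `s + 1` is given to an eligible candidate `winner s` of maximal support, and the
votes approving the winner are reduced according to the quota rule. -/
structure Exec {ι κ : Type*} [Fintype ι] [DecidableEq ι] [Fintype κ]
    (P : Input ι κ) : Type _ where
  /-- the vote weights `v_k[s]` -/
  vk : ℕ → κ → ℝ
  /-- the seat counts `n_i[s]` -/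
  seats : ℕ → ι → ℕ
  /-- the candidate receiving seat `s + 1` -/
  winner : ℕ → ι
  vk_init : vk 0 = P.v
  seats_init : ∀ i, seats 0 i = 0
  /-- the winner is eligible -/
  winner_elig : ∀ s < P.n, (seats s (winner s) : ℕ∞) < P.m (winner s)
  /-- the winner maximizes the support among eligible candidates -/
  winner_max : ∀ s < P.n, ∀ i : ι, (seats s i : ℕ∞) < P.m i →
    P.supp (vk s) i ≤ P.supp (vk s) (winner s)
  seats_succ : ∀ s < P.n, ∀ i : ι,
    seats (s + 1) i = if i = winner s then seats s i + 1 else seats s i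
  /-- vote reduction when the winner has at least a quota -/
  vk_succ_ge : ∀ s < P.n, ∀ k, winner s ∈ P.A k → P.q ≤ P.supp (vk s) (winner s) →
    vk (s + 1) k = (1 - P.q / P.supp (vk s) (winner s)) * vk s k
  /-- vote exhaustion when the winner has less than a quota -/
  vk_succ_lt : ∀ s < P.n, ∀ k, winner s ∈ P.A k → P.supp (vk s) (winner s) < P.q →
    vk (s + 1) k = 0
  /-- votes not approving the winner are unchanged -/
  vk_succ_out : ∀ s < P.n, ∀ k, winner s ∉ P.A k → vk (s + 1) k = vk s k

end EP

namespace EP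

variable {ι κ : Type*} [Fintype ι] [DecidableEq ι] [Fintype κ] (P : Input ι κ)

lemma Input.V_nonneg : 0 ≤ P.V :=
  Finset.sum_nonneg fun k _ => (P.hv k).le

lemma Input.q_nonneg : 0 ≤ P.q :=
  div_nonneg P.V_nonneg (by positivity)

lemma Exec.vk_nonneg (E : Exec P) : ∀ s, s ≤ P.n → ∀ k, 0 ≤ E.vk s k := by
  intro s
  induction s with
  | zero => intro _ k; rw [E.vk_init]; exact (P.hv k).le
  | succ s ih =>
    intro hs k
    have hsn : s < P.n := hs
    by_cases hk : E.winner s ∈ P.A k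
    · by_cases hw : P.q ≤ P.supp (E.vk s) (E.winner s)
      · rw [E.vk_succ_ge s hsn k hk hw]
        have hw0 : 0 ≤ P.supp (E.vk s) (E.winner s) := le_trans P.q_nonneg hw
        have hd1 : P.q / P.supp (E.vk s) (E.winner s) ≤ 1 :=
          div_le_one_of_le₀ hw hw0
        exact mul_nonneg (by linarith) (ih hsn.le k)
      · rw [E.vk_succ_lt s hsn k hk (lt_of_not_ge hw)]
    · rw [E.vk_succ_out s hsn k hk]; exact ih hsn.le k

lemma Exec.total (E : Exec P)
    (h : ∀ s < P.n, P.q < P.supp (E.vk s) (E.winner s)) :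
    ∀ s, s ≤ P.n → ∑ k, E.vk s k = P.V - s * P.q := by
  intro s
  induction s with
  | zero => intro _; rw [E.vk_init]; simp [Input.V]
  | succ s ih =>
    intro hs
    have hsn : s < P.n := hs
    have hw := h s hsn
    set w := P.supp (E.vk s) (E.winner s) with hwdef
    have hw0 : 0 < w := lt_of_le_of_lt P.q_nonneg hw
    have hsum : ∑ k, E.vk (s + 1) k = ∑ k, E.vk s k - P.q := by
      rw [← Finset.sum_filter_add_sum_filter_not Finset.univ
            (fun k => E.winner s ∈ P.A k) (E.vk (s + 1)),
          ← Finset.sum_filter_add_sum_filter_not Finset.univ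
            (fun k => E.winner s ∈ P.A k) (E.vk s)]
      have h1 : ∑ k ∈ Finset.univ.filter (fun k => E.winner s ∈ P.A k), E.vk (s + 1) k
          = (1 - P.q / w) * ∑ k ∈ Finset.univ.filter (fun k => E.winner s ∈ P.A k),
              E.vk s k := by
        rw [Finset.mul_sum]
        refine Finset.sum_congr rfl fun k hk => ?_
        exact E.vk_succ_ge s hsn k (Finset.mem_filter.mp hk).2 hw.le
      have h2 : ∑ k ∈ Finset.univ.filter (fun k => ¬ E.winner s ∈ P.A k), E.vk (s + 1) k
          = ∑ k ∈ Finset.univ.filter (fun k => ¬ E.winner s ∈ P.A k), E.vk s k := by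
        refine Finset.sum_congr rfl fun k hk => ?_
        exact E.vk_succ_out s hsn k (Finset.mem_filter.mp hk).2
      have hsupp : ∑ k ∈ Finset.univ.filter (fun k => E.winner s ∈ P.A k), E.vk s k = w :=
        rfl
      rw [h1, h2, hsupp, sub_mul, one_mul, div_mul_cancel₀ _ hw0.ne']
      ring
    rw [hsum, ih hsn.le]
    push_cast
    ring

end EP

open EP in
/-- in any execution, if `w_*[s] > q` at every step `s < n`, then the total
remaining weight after the last seat is exactly `q` and every candidate has support at
most `q`.  Consequently, there always exists some `s ≤ n` at which the maximal support
over the eligible candidates is at most `q` (i.e. `p = min {s : w_*[s] ≤ q} ≤ n`). -/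
theorem enestrom_phragmen_wstar_eventually_le_quota
    {ι κ : Type*} [Fintype ι] [DecidableEq ι] [Fintype κ]
    (P : Input ι κ) (henough : P.enough) (E : Exec P) :
    ((∀ s < P.n, P.q < P.supp (E.vk s) (E.winner s)) →
      (∑ k, E.vk P.n k) = P.q ∧ ∀ i : ι, P.supp (E.vk P.n) i ≤ P.q) ∧
    (∃ s ≤ P.n, ∀ i : ι, (E.seats s i : ℕ∞) < P.m i → P.supp (E.vk s) i ≤ P.q) := by
  have main : (∀ s < P.n, P.q < P.supp (E.vk s) (E.winner s)) →
      (∑ k, E.vk P.n k) = P.q ∧ ∀ i : ι, P.supp (E.vk P.n) i ≤ P.q := by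
    intro h
    have htot : ∑ k, E.vk P.n k = P.V - P.n * P.q := E.total P h P.n le_rfl
    have hq : P.V - P.n * P.q = P.q := by
      have hne : (P.n : ℝ) + 1 ≠ 0 := by positivity
      rw [Input.q]
      field_simp
      ring
    have htotq : ∑ k, E.vk P.n k = P.q := by rw [htot, hq]
    refine ⟨htotq, fun i => ?_⟩
    calc P.supp (E.vk P.n) i ≤ ∑ k, E.vk P.n k := by
          refine Finset.sum_le_sum_of_subset_of_nonneg (Finset.filter_subset _ _)
            fun k _ _ => E.vk_nonneg P P.n le_rfl k
      _ = P.q := htotq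
  refine ⟨main, ?_⟩
  by_cases hcase : ∃ s < P.n, ∀ i : ι, (E.seats s i : ℕ∞) < P.m i →
      P.supp (E.vk s) i ≤ P.q
  · obtain ⟨s, hs, hi⟩ := hcase
    exact ⟨s, hs.le, hi⟩
  · push_neg at hcase
    have h : ∀ s < P.n, P.q < P.supp (E.vk s) (E.winner s) := by
      intro s hs
      obtain ⟨i, hi, hqi⟩ := hcase s hs
      exact lt_of_lt_of_le hqi (E.winner_max s hs i hi)
    exact ⟨P.n, le_rfl, fun i _ => (main h).2 i⟩
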